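/- There exists a constant C > 0 such that the following holds for all positive integers d, T, N, all ε ∈ (0,1), and all δ ∈ (0,1). Let x_1,…,x_T ∈ X_d, y_1,…,y_T ∈ {0,1}, and P_1,…,P_T be probability distributions on the grid Z, and let p_1,…,p_T be independent random variables with p_t distributed according to P_t. Then with probability at least 1 − δ, SMCal_{F_1^lin,2} ≤ C·( N·log(N/δ) + N·d·log(1/ε) + PSMCal_{F_1^lin,2} + ε²·T ). -/

import Mathlib

open Finset

section helpers
open MeasureTheory Metric


lemma exp_quadratic {x : ℝ} (h : |x| ≤ 1) : Real.exp x ≤ 1 + x + x ^ 2 := by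
  have h2 := Real.exp_bound h (n := 2) (by norm_num)
  have : ∑ m ∈ range 2, x ^ m / (m.factorial : ℝ) = 1 + x := by
    simp [Finset.sum_range_succ]
  rw [this] at h2
  have habs : |Real.exp x - (1 + x)| ≤ x ^ 2 * (3 / 4) := by
    calc |Real.exp x - (1 + x)| ≤ |x| ^ 2 * ((2:ℕ).succ / ((2:ℕ).factorial * 2)) := h2
    _ = x ^ 2 * (3 / 4) := by rw [sq_abs]; norm_num
  have := abs_le.mp habs
  nlinarith [sq_nonneg x]

lemma mgf_step {q a l : ℝ} (hq0 : 0 ≤ q) (hq1 : q ≤ 1) (ha : |a| ≤ 1) (hl : |l| ≤ 1) :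
    q * Real.exp (l * a) + (1 - q) ≤ Real.exp (l * (q * a) + l ^ 2 * (q * a ^ 2)) := by
  have hla : |l * a| ≤ 1 := by
    rw [abs_mul]
    calc |l| * |a| ≤ 1 * 1 := by
          exact mul_le_mul hl ha (abs_nonneg _) zero_le_one
    _ = 1 := by ring
  have h1 : Real.exp (l * a) ≤ 1 + l * a + (l * a) ^ 2 := exp_quadratic hla
  have h2 : q * Real.exp (l * a) + (1 - q) ≤ 1 + (l * (q * a) + l ^ 2 * (q * a ^ 2)) := by
    nlinarith [mul_pow l a 2]
  calc q * Real.exp (l * a) + (1 - q) ≤ 1 + (l * (q * a) + l ^ 2 * (q * a ^ 2)) := h2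
  _ ≤ Real.exp (l * (q * a) + l ^ 2 * (q * a ^ 2)) := by
    linarith [Real.add_one_le_exp (l * (q * a) + l ^ 2 * (q * a ^ 2))]

lemma chernoff {T N : ℕ} (P : Fin T → Fin (N+1) → ℝ) (hP : ∀ t i, 0 ≤ P t i)
    (hP1 : ∀ t, ∑ i, P t i = 1) (a : Fin T → ℝ) (ha : ∀ t, |a t| ≤ 1)
    (p : Fin (N+1)) (L : ℝ) (hL : 0 < L) :
    ∑ ω : Fin T → Fin (N+1),
      (if 2 * Real.sqrt ((∑ t, P t p * a t ^ 2) * L) + 2 * L ≤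
          (∑ t, if ω t = p then a t else 0) - ∑ t, P t p * a t
       then ∏ t, P t (ω t) else 0) ≤ Real.exp (-L) := by
  classical
  set V : ℝ := ∑ t, P t p * a t ^ 2 with hV
  have hV0 : 0 ≤ V := Finset.sum_nonneg fun t _ => mul_nonneg (hP t p) (sq_nonneg _)
  set s : ℝ := 2 * Real.sqrt (V * L) + 2 * L with hs
  set l : ℝ := if V ≤ L then 1 else Real.sqrt (L / V) with hldef
  have hl0 : 0 ≤ l := by
    rw [hldef]; split
    · norm_num
    · exact Real.sqrt_nonneg _
  have hl1 : l ≤ 1 := by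
    rw [hldef]; split
    · exact le_refl 1
    · rename_i h
      push_neg at h
      have : L / V ≤ 1 := (div_le_one (hL.trans h)).mpr h.le
      calc Real.sqrt (L / V) ≤ Real.sqrt 1 := Real.sqrt_le_sqrt this
      _ = 1 := Real.sqrt_one
  have hexp : l ^ 2 * V - l * s ≤ -L := by
    rw [hldef]; split
    · rename_i h
      have h1 : 0 ≤ Real.sqrt (V * L) := Real.sqrt_nonneg _
      simp only [hs]; nlinarith
    · rename_i h
      push_neg at h
      have hVpos : 0 < V := lt_of_le_of_lt hL.le h
      have h1 : Real.sqrt (L / V) ^ 2 = L / V := Real.sq_sqrt (by positivity)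
      have h2 : Real.sqrt (L / V) * Real.sqrt (V * L) = L := by
        rw [← Real.sqrt_mul (by positivity)]
        have : L / V * (V * L) = L ^ 2 := by field_simp
        rw [this, Real.sqrt_sq hL.le]
      have h3 : 0 ≤ Real.sqrt (L / V) := Real.sqrt_nonneg _
      have h4 : L / V * V = L := div_mul_cancel₀ _ hVpos.ne'
      simp only [hs]
      nlinarith
  -- pointwise bound by exponential
  have hpt : ∀ ω : Fin T → Fin (N+1),
      (if s ≤ (∑ t, if ω t = p then a t else 0) - ∑ t, P t p * a t
       then ∏ t, P t (ω t) else 0) ≤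
      Real.exp (l * ((∑ t, if ω t = p then a t else 0) - ∑ t, P t p * a t) - l * s) *
        ∏ t, P t (ω t) := by
    intro ω
    have hprod : 0 ≤ ∏ t, P t (ω t) := Finset.prod_nonneg fun t _ => hP t (ω t)
    split
    · rename_i hcond
      have : (0:ℝ) ≤ l * ((∑ t, if ω t = p then a t else 0) - ∑ t, P t p * a t) - l * s := by
        have := mul_le_mul_of_nonneg_left hcond hl0
        linarith
      nlinarith [Real.one_le_exp this]
    · positivity
  have hsum := Finset.sum_le_sum (fun ω (_ : ω ∈ Finset.univ) => hpt ω)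
  refine le_trans hsum ?_
  -- factorize
  have hfact : ∑ ω : Fin T → Fin (N+1),
      Real.exp (l * ((∑ t, if ω t = p then a t else 0) - ∑ t, P t p * a t) - l * s) *
        ∏ t, P t (ω t)
      = Real.exp (-(l * ∑ t, P t p * a t) - l * s) *
        ∑ ω : Fin T → Fin (N+1), ∏ t, (P t (ω t) * Real.exp (l * if ω t = p then a t else 0)) := by
    rw [Finset.mul_sum]
    refine Finset.sum_congr rfl fun ω _ => ?_
    rw [Finset.prod_mul_distrib, ← Real.exp_sum, ← Finset.mul_sum,
      mul_comm (∏ x, P x (ω x)) _, ← mul_assoc, ← Real.exp_add]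
    congr 1
    ring
  rw [hfact]
  have hprodsum : ∑ ω : Fin T → Fin (N+1), ∏ t, (P t (ω t) * Real.exp (l * if ω t = p then a t else 0))
      = ∏ t, ∑ i, P t i * Real.exp (l * if i = p then a t else 0) := by
    rw [Finset.prod_univ_sum (fun _ => Finset.univ)
      (fun t i => P t i * Real.exp (l * if i = p then a t else 0)), Fintype.piFinset_univ]
  rw [hprodsum]
  -- bound each factor
  have hfac : ∀ t, ∑ i, P t i * Real.exp (l * if i = p then a t else 0)
      ≤ Real.exp (l * (P t p * a t) + l ^ 2 * (P t p * a t ^ 2)) := by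
    intro t
    have hq1 : P t p ≤ 1 := by
      have := Finset.single_le_sum (f := P t) (fun i _ => hP t i) (Finset.mem_univ p)
      rw [hP1 t] at this; exact this
    have hsplit : ∑ i, P t i * Real.exp (l * if i = p then a t else 0)
        = P t p * Real.exp (l * a t) + (1 - P t p) := by
      have : ∀ i : Fin (N+1), P t i * Real.exp (l * if i = p then a t else 0)
          = (if i = p then P t p * Real.exp (l * a t) - P t p else 0) + P t i := by
        intro i
        by_cases h : i = p <;> simp [h]
      rw [Finset.sum_congr rfl fun i _ => this i, Finset.sum_add_distrib,
        Finset.sum_ite_eq' Finset.univ p _, hP1 t]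
      simp; ring
    rw [hsplit]
    exact mgf_step (hP t p) hq1 (ha t) (abs_le.mpr ⟨by linarith, hl1⟩)
  have hfacnn : ∀ t (_ : t ∈ Finset.univ), (0:ℝ) ≤ ∑ i, P t i * Real.exp (l * if i = p then a t else 0) :=
    fun t _ => Finset.sum_nonneg fun i _ => mul_nonneg (hP t i) (Real.exp_nonneg _)
  have hprodle : ∏ t, ∑ i, P t i * Real.exp (l * if i = p then a t else 0)
      ≤ ∏ t : Fin T, Real.exp (l * (P t p * a t) + l ^ 2 * (P t p * a t ^ 2)) :=
    Finset.prod_le_prod hfacnn (fun t _ => hfac t)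
  have hprodexp : ∏ t : Fin T, Real.exp (l * (P t p * a t) + l ^ 2 * (P t p * a t ^ 2))
      = Real.exp (l * (∑ t, P t p * a t) + l ^ 2 * V) := by
    rw [← Real.exp_sum]
    congr 1
    rw [Finset.sum_add_distrib, ← Finset.mul_sum, ← Finset.mul_sum]
  calc Real.exp (-(l * ∑ t, P t p * a t) - l * s) *
        ∏ t, ∑ i, P t i * Real.exp (l * if i = p then a t else 0)
      ≤ Real.exp (-(l * ∑ t, P t p * a t) - l * s) *
        Real.exp (l * (∑ t, P t p * a t) + l ^ 2 * V) := by
        exact mul_le_mul_of_nonneg_left (hprodexp ▸ hprodle) (Real.exp_nonneg _)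
  _ = Real.exp (l ^ 2 * V - l * s) := by rw [← Real.exp_add]; ring_nf
  _ ≤ Real.exp (-L) := Real.exp_le_exp.mpr hexp


lemma exists_net (d : ℕ) (hd : 0 < d) (R ε : ℝ) (hR : 0 < R) (hε : 0 < ε) (hεR : ε ≤ R) :
    ∃ 𝒩 : Finset (EuclideanSpace ℝ (Fin d)),
      (∀ ν ∈ 𝒩, ‖ν‖ ≤ R) ∧
      (∀ x : EuclideanSpace ℝ (Fin d), ‖x‖ ≤ R → ∃ ν ∈ 𝒩, ‖x - ν‖ ≤ ε) ∧
      ((𝒩.card : ℝ) ≤ (3 * R / ε) ^ d) := by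
  classical
  haveI : Nontrivial (EuclideanSpace ℝ (Fin d)) := by
    refine ⟨0, EuclideanSpace.single ⟨0, hd⟩ 1, ?_⟩
    intro h
    have := congrArg (fun v : EuclideanSpace ℝ (Fin d) => v ⟨0, hd⟩) h.symm
    simp [EuclideanSpace.single] at this
  set E := EuclideanSpace ℝ (Fin d)
  set μ : Measure E := volume with hμ
  set c : ENNReal := μ (ball (0:E) 1) with hc
  have hc0 : c ≠ 0 := (measure_ball_pos μ 0 one_pos).ne'
  have hctop : c ≠ ⊤ := measure_ball_lt_top.ne
  set Q : Finset E → Prop :=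
    fun S => (∀ ν ∈ S, ‖ν‖ ≤ R) ∧ ∀ a ∈ S, ∀ b ∈ S, a ≠ b → ε < dist a b with hQ
  have cardBound : ∀ S : Finset E, Q S → (S.card : ℝ) ≤ (3 * R / ε) ^ d := by
    intro S hS
    have hdisj : (↑S : Set E).PairwiseDisjoint (fun ν => ball ν (ε/2)) := by
      intro a ha b hb hab
      exact ball_disjoint_ball (by linarith [hS.2 a ha b hb hab])
    have hmeas := measure_biUnion_finset (μ := μ) hdisj (fun b _ => measurableSet_ball)
    have hsub : (⋃ ν ∈ S, ball ν (ε/2)) ⊆ ball (0:E) (R + ε/2) := by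
      intro z hz
      simp only [Set.mem_iUnion] at hz
      obtain ⟨ν, hν, hz⟩ := hz
      rw [mem_ball] at hz ⊢
      calc dist z 0 ≤ dist z ν + dist ν 0 := dist_triangle _ _ _
      _ < ε/2 + R := by
          have : dist ν 0 ≤ R := by rw [dist_zero_right]; exact hS.1 ν hν
          linarith
      _ = R + ε/2 := by ring
    have hballν : ∀ ν : E, μ (ball ν (ε/2)) = ENNReal.ofReal ((ε/2) ^ d) * c := by
      intro ν
      rw [hc, Measure.addHaar_ball μ ν (by linarith : (0:ℝ) ≤ ε/2)]
      congr 2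
      rw [finrank_euclideanSpace_fin]
    have hbig : μ (ball (0:E) (R + ε/2)) = ENNReal.ofReal ((R + ε/2) ^ d) * c := by
      rw [hc, Measure.addHaar_ball μ 0 (by linarith : (0:ℝ) ≤ R + ε/2)]
      congr 2
      rw [finrank_euclideanSpace_fin]
    have key : (S.card : ENNReal) * ENNReal.ofReal ((ε/2) ^ d) ≤ ENNReal.ofReal ((R + ε/2) ^ d) := by
      have h1 : ∑ ν ∈ S, μ (ball ν (ε/2)) ≤ μ (ball (0:E) (R + ε/2)) := by
        rw [← hmeas]; exact measure_mono hsub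
      rw [Finset.sum_congr rfl (fun ν _ => hballν ν), Finset.sum_const, hbig] at h1
      rw [nsmul_eq_mul, ← mul_assoc] at h1
      exact (ENNReal.mul_le_mul_iff_left hc0 hctop).mp h1
    have hreal : (S.card : ℝ) * (ε/2) ^ d ≤ (R + ε/2) ^ d := by
      have := key
      rw [← ENNReal.ofReal_natCast, ← ENNReal.ofReal_mul (by positivity)] at this
      exact (ENNReal.ofReal_le_ofReal_iff (by positivity)).mp this
    have hpow : ((R + ε/2) / (ε/2)) ^ d ≤ (3 * R / ε) ^ d := by
      apply pow_le_pow_left₀ (by positivity)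
      rw [div_le_div_iff₀ (by linarith) hε]
      nlinarith
    have h2 : (S.card : ℝ) ≤ (R + ε/2) ^ d / (ε/2) ^ d := by
      rw [le_div_iff₀ (by positivity)]
      exact hreal
    rw [← div_pow] at h2
    exact h2.trans hpow
  set b : ℕ := ⌈(3 * R / ε) ^ d⌉₊ with hb
  set Pn : ℕ → Prop := fun n => ∃ S : Finset E, Q S ∧ S.card = n with hPn
  have hP0 : Pn 0 := ⟨∅, ⟨fun ν hν => absurd hν (Finset.notMem_empty ν),
    fun a ha => absurd ha (Finset.notMem_empty a)⟩, Finset.card_empty⟩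
  obtain ⟨S, hQS, hcardS⟩ := Nat.findGreatest_spec (Nat.zero_le b) hP0
  refine ⟨S, hQS.1, ?_, cardBound S hQS⟩
  intro x hx
  by_contra hcon
  push_neg at hcon
  have hxS : x ∉ S := by
    intro hxS
    have := hcon x hxS
    simp at this
    linarith
  have hQS' : Q (insert x S) := by
    constructor
    · intro ν hν
      rcases Finset.mem_insert.mp hν with h | h
      · rw [h]; exact hx
      · exact hQS.1 ν h
    · intro a ha b' hb' hab
      rcases Finset.mem_insert.mp ha with h1 | h1 <;>
        rcases Finset.mem_insert.mp hb' with h2 | h2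
      · exact absurd (h1.trans h2.symm) hab
      · rw [h1, dist_eq_norm]; exact hcon b' h2
      · rw [h2, dist_comm, dist_eq_norm]; exact hcon a h1
      · exact hQS.2 a h1 b' h2 hab
  have hcard' : (insert x S).card = S.card + 1 := Finset.card_insert_of_notMem hxS
  have hle : Nat.findGreatest Pn b + 1 ≤ b := by
    have h1 : ((insert x S).card : ℝ) ≤ (3 * R / ε) ^ d := cardBound _ hQS'
    have h2 : ((insert x S).card : ℝ) ≤ (b : ℝ) := h1.trans (Nat.le_ceil _)
    have h3 : (insert x S).card ≤ b := Nat.cast_le.mp h2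
    rw [hcard', hcardS] at h3
    exact h3
  exact Nat.findGreatest_is_greatest (Nat.lt_succ_self _) hle ⟨insert x S, hQS', by rw [hcard', hcardS]⟩

noncomputable def toE {d : ℕ} (f : Fin d → ℝ) : EuclideanSpace ℝ (Fin d) := WithLp.toLp 2 f

lemma toE_apply {d : ℕ} (f : Fin d → ℝ) (i : Fin d) : toE f i = f i := rfl

lemma norm_toE {d : ℕ} (f : Fin d → ℝ) : ‖toE f‖ = Real.sqrt (∑ i, f i ^ 2) := by
  rw [EuclideanSpace.norm_eq]
  congr 1
  exact Finset.sum_congr rfl fun i _ => by rw [Real.norm_eq_abs, sq_abs]; rfl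

lemma sub_toE {d : ℕ} (f g : Fin d → ℝ) : toE f - toE g = toE (fun i => f i - g i) := rfl

lemma exists_netP (d : ℕ) (hd : 0 < d) (ε : ℝ) (hε : 0 < ε) (hε1 : ε ≤ 1)
    (F : (Fin d → ℝ) → Prop) (hF0 : F (fun _ => 0))
    (hFnorm : ∀ θ, F θ → Real.sqrt (∑ i, θ i ^ 2) ≤ 4) :
    ∃ 𝒩 : Finset (Fin d → ℝ), (∀ ν ∈ 𝒩, F ν) ∧
      (∀ θ, F θ → ∃ ν ∈ 𝒩, Real.sqrt (∑ i, (θ i - ν i) ^ 2) ≤ 2 * ε) ∧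
      ((𝒩.card : ℝ) ≤ (12 / ε) ^ d) := by
  classical
  obtain ⟨𝒩₀, h𝒩₀R, h𝒩₀net, h𝒩₀card⟩ := exists_net d hd 4 ε (by norm_num) hε (by linarith)
  set g : EuclideanSpace ℝ (Fin d) → (Fin d → ℝ) := fun ν₀ =>
    if h : ∃ θ : Fin d → ℝ, F θ ∧ ‖toE θ - ν₀‖ ≤ ε then h.choose else (fun _ => 0) with hg
  refine ⟨𝒩₀.image g, ?_, ?_, ?_⟩
  · intro ν hν
    obtain ⟨ν₀, _, rfl⟩ := Finset.mem_image.mp hν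
    rw [hg]
    by_cases h : ∃ θ : Fin d → ℝ, F θ ∧ ‖toE θ - ν₀‖ ≤ ε
    · simp only [dif_pos h]
      exact h.choose_spec.1
    · simp only [dif_neg h]
      exact hF0
  · intro θ hθ
    have hθnorm : ‖toE θ‖ ≤ 4 := by rw [norm_toE]; exact hFnorm θ hθ
    obtain ⟨ν₀, hν₀mem, hν₀close⟩ := h𝒩₀net (toE θ) hθnorm
    have hex : ∃ θ' : Fin d → ℝ, F θ' ∧ ‖toE θ' - ν₀‖ ≤ ε := ⟨θ, hθ, hν₀close⟩
    refine ⟨g ν₀, Finset.mem_image_of_mem g hν₀mem, ?_⟩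
    have hgν₀ : F (g ν₀) ∧ ‖toE (g ν₀) - ν₀‖ ≤ ε := by
      rw [hg]
      simp only [dif_pos hex]
      exact hex.choose_spec
    have htri : ‖toE θ - toE (g ν₀)‖ ≤ 2 * ε := by
      calc ‖toE θ - toE (g ν₀)‖ ≤ ‖toE θ - ν₀‖ + ‖ν₀ - toE (g ν₀)‖ := norm_sub_le_norm_sub_add_norm_sub _ _ _
      _ ≤ ε + ε := add_le_add hν₀close (by rw [norm_sub_rev]; exact hgν₀.2)
      _ = 2 * ε := by ring
    rw [sub_toE, norm_toE] at htri
    exact htri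
  · calc ((𝒩₀.image g).card : ℝ) ≤ (𝒩₀.card : ℝ) := by exact_mod_cast Finset.card_image_le
    _ ≤ (3 * 4 / ε) ^ d := h𝒩₀card
    _ = (12 / ε) ^ d := by norm_num


lemma F_norm_le {d : ℕ} (hd : 0 < d) (θ : Fin d → ℝ)
    (hθ : ∀ v : Fin d → ℝ, Real.sqrt (∑ i, v i ^ 2) ≤ 1 → v ⟨0, hd⟩ = 1 / 2 →
      |∑ i, θ i * v i| ≤ 1) :
    Real.sqrt (∑ i, θ i ^ 2) ≤ 4 := by
  classical
  set z : Fin d := ⟨0, hd⟩ with hz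
  -- Step 1 : |θ z| ≤ 2
  have hθz : |θ z| ≤ 2 := by
    set v : Fin d → ℝ := fun i => if i = z then (1:ℝ)/2 else 0 with hv
    have hv2 : ∑ i, v i ^ 2 = 1/4 := by
      have : ∀ i, v i ^ 2 = if i = z then (1/4:ℝ) else 0 := by
        intro i; by_cases h : i = z <;> simp [hv, h] <;> norm_num
      rw [Finset.sum_congr rfl fun i _ => this i, Finset.sum_ite_eq' Finset.univ z]
      simp
    have h1 : Real.sqrt (∑ i, v i ^ 2) ≤ 1 := by
      rw [hv2]
      calc Real.sqrt (1/4) ≤ Real.sqrt 1 := Real.sqrt_le_sqrt (by norm_num)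
      _ = 1 := Real.sqrt_one
    have h2 : v z = 1/2 := by simp [hv]
    have hsum : ∑ i, θ i * v i = θ z * (1/2) := by
      have : ∀ i, θ i * v i = if i = z then θ z * (1/2) else 0 := by
        intro i; by_cases h : i = z <;> simp [hv, h]
      rw [Finset.sum_congr rfl fun i _ => this i, Finset.sum_ite_eq' Finset.univ z]
      simp
    have h3 := hθ v h1 h2
    rw [hsum, abs_mul, abs_of_pos (by norm_num : (0:ℝ) < 1/2)] at h3
    linarith
  -- Step 2
  set u : Fin d → ℝ := fun i => if i = z then 0 else θ i with hu
  set s : ℝ := ∑ i, u i ^ 2 with hs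
  have hs0 : 0 ≤ s := Finset.sum_nonneg fun i _ => sq_nonneg _
  have hsplit : ∑ i, θ i ^ 2 = θ z ^ 2 + s := by
    have : ∀ i, θ i ^ 2 = (if i = z then θ z ^ 2 else 0) + u i ^ 2 := by
      intro i; by_cases h : i = z <;> simp [hu, h]
    rw [Finset.sum_congr rfl fun i _ => this i, Finset.sum_add_distrib,
      Finset.sum_ite_eq' Finset.univ z]
    simp [hs]
  by_cases hse : s = 0
  · rw [hsplit, hse, add_zero, Real.sqrt_sq_eq_abs]
    linarith
  have hspos : 0 < s := lt_of_le_of_ne hs0 (Ne.symm hse)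
  have key : ∀ σ : ℝ, |σ| = 1 →
      |θ z * (1/2) + σ * (Real.sqrt 3 / 2) * Real.sqrt s| ≤ 1 := by
    intro σ hσ
    have hσ2 : σ ^ 2 = 1 := by rw [← sq_abs, hσ]; norm_num
    set v : Fin d → ℝ := fun i => if i = z then 1/2 else σ * (Real.sqrt 3 / 2) * u i / Real.sqrt s with hv
    have huz : u z = 0 := by simp [hu]
    have hv2 : ∑ i, v i ^ 2 = 1 := by
      have : ∀ i, v i ^ 2 = (if i = z then (1/4:ℝ) else 0) + (3/4) * u i ^ 2 / s := by
        intro i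
        by_cases h : i = z
        · simp [hv, h, huz]; norm_num
        · simp only [hv, if_neg h, if_neg h]
          have e1 : (σ * (Real.sqrt 3 / 2) * u i / Real.sqrt s) ^ 2
              = σ ^ 2 * ((Real.sqrt 3) ^ 2 / 4) * u i ^ 2 / (Real.sqrt s) ^ 2 := by ring
          rw [e1, hσ2, Real.sq_sqrt hs0, Real.sq_sqrt (by norm_num : (0:ℝ) ≤ 3)]
          ring
      rw [Finset.sum_congr rfl fun i _ => this i, Finset.sum_add_distrib,
        Finset.sum_ite_eq' Finset.univ z]
      have : ∑ i, (3/4) * u i ^ 2 / s = (3/4) * s / s := by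
        rw [← Finset.sum_div, ← Finset.mul_sum]
      rw [this, mul_div_assoc, div_self hse]
      norm_num
    have h1 : Real.sqrt (∑ i, v i ^ 2) ≤ 1 := by rw [hv2, Real.sqrt_one]
    have h2 : v z = 1/2 := by simp [hv]
    have hsum : ∑ i, θ i * v i = θ z * (1/2) + σ * (Real.sqrt 3 / 2) * Real.sqrt s := by
      have : ∀ i, θ i * v i
          = (if i = z then θ z * (1/2) else 0) + σ * (Real.sqrt 3 / 2) * (u i ^ 2) / Real.sqrt s := by
        intro i
        by_cases h : i = z
        · simp [hv, h, huz]
        · simp only [hv, if_neg h, if_neg h]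
          have : θ i = u i := by simp [hu, h]
          rw [this]; ring
      rw [Finset.sum_congr rfl fun i _ => this i, Finset.sum_add_distrib,
        Finset.sum_ite_eq' Finset.univ z]
      have e2 : ∑ i, σ * (Real.sqrt 3 / 2) * u i ^ 2 / Real.sqrt s
          = σ * (Real.sqrt 3 / 2) * s / Real.sqrt s := by
        rw [← Finset.sum_div, ← Finset.mul_sum]
      rw [e2]
      have e3 : σ * (Real.sqrt 3 / 2) * s / Real.sqrt s
          = σ * (Real.sqrt 3 / 2) * Real.sqrt s := by
        rw [mul_div_assoc, Real.div_sqrt]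
      rw [e3]
      simp
    have h3 := hθ v h1 h2
    rw [hsum] at h3
    exact h3
  have k1 := key 1 (by norm_num)
  have k2 := key (-1) (by norm_num)
  rw [abs_le] at k1 k2
  have hB : Real.sqrt 3 / 2 * Real.sqrt s ≤ 1 := by
    rcases k1 with ⟨k1a, k1b⟩
    rcases k2 with ⟨k2a, k2b⟩
    nlinarith
  have hsle : s ≤ 4/3 := by
    have e1 : (Real.sqrt 3) ^ 2 = 3 := Real.sq_sqrt (by norm_num)
    have e2 : (Real.sqrt s) ^ 2 = s := Real.sq_sqrt hs0
    nlinarith [Real.sqrt_nonneg (3:ℝ), Real.sqrt_nonneg s]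
  have : Real.sqrt (∑ i, θ i ^ 2) ≤ Real.sqrt 16 := by
    apply Real.sqrt_le_sqrt
    rw [hsplit]
    nlinarith [sq_abs (θ z)]
  rw [show (16:ℝ) = 4^2 by norm_num, Real.sqrt_sq (by norm_num : (0:ℝ) ≤ 4)] at this
  exact this


lemma four_sq (a b c d : ℝ) : (a + b + c + d) ^ 2 ≤ 4 * (a ^ 2 + b ^ 2 + c ^ 2 + d ^ 2) := by
  nlinarith [sq_nonneg (a - b), sq_nonneg (a - c), sq_nonneg (a - d), sq_nonneg (b - c),
    sq_nonneg (b - d), sq_nonneg (c - d)]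

set_option maxHeartbeats 2000000 in
lemma det_bound {St Sn Pn n m L e R' : ℝ}
    (hn : n = 0 ∨ 1 ≤ n) (hm : 0 ≤ m) (hL : 0 < L) (he : 0 ≤ e) (hR : 0 ≤ R')
    (h1 : |St| ≤ n) (h2 : |St - Sn| ≤ e * n)
    (h3 : |Sn - Pn| ≤ 2 * Real.sqrt (m * L) + 2 * L)
    (h4 : |n - m| ≤ 2 * Real.sqrt (m * L) + 2 * L)
    (h5 : |Pn| ≤ m) (h6 : Pn ^ 2 ≤ m * R') :
    St ^ 2 ≤ (100 * L + 8 * R' + 4 * e ^ 2 * n) * n := by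
  rcases hn with hn0 | hn1
  · have : St = 0 := by
      have := abs_nonneg St
      have h1' := h1
      rw [hn0] at h1'
      have : |St| = 0 := le_antisymm h1' (abs_nonneg St)
      exact abs_eq_zero.mp this
    rw [this, hn0]
    norm_num
  set w : ℝ := Real.sqrt (m * L) with hw
  have hw0 : 0 ≤ w := Real.sqrt_nonneg _
  have hw2 : w ^ 2 = m * L := Real.sq_sqrt (mul_nonneg hm hL.le)
  have hn0 : (0:ℝ) < n := by linarith
  by_cases hcase : n ≤ 100 * L
  · -- trivial case
    have hSt2 : St ^ 2 ≤ n ^ 2 := by nlinarith [abs_le.mp h1]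
    nlinarith [mul_nonneg hR hn0.le, mul_nonneg (mul_nonneg (sq_nonneg e) hn0.le) hn0.le]
  push_neg at hcase
  have h4' := abs_le.mp h4
  have hm2 : n / 2 ≤ m := by
    nlinarith [sq_nonneg (w - n / 20)]
  have hm2n : m ≤ 2 * n := by
    nlinarith [sq_nonneg (w - m / 20)]
  have h2' := abs_le.mp h2
  have h3' := abs_le.mp h3
  have habs : |St| ≤ |Pn| + 2 * w + 2 * L + e * n := by
    have a1 : |St| ≤ |Sn| + |St - Sn| := by
      calc |St| = |Sn + (St - Sn)| := by ring_nf
      _ ≤ |Sn| + |St - Sn| := abs_add_le _ _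
    have a2 : |Sn| ≤ |Pn| + |Sn - Pn| := by
      calc |Sn| = |Pn + (Sn - Pn)| := by ring_nf
      _ ≤ |Pn| + |Sn - Pn| := abs_add_le _ _
    linarith
  have hsq : St ^ 2 ≤ (|Pn| + 2 * w + 2 * L + e * n) ^ 2 := by
    have h0 : 0 ≤ |Pn| + 2 * w + 2 * L + e * n := by positivity
    nlinarith [abs_nonneg St, sq_abs St]
  have hexp : (|Pn| + 2 * w + 2 * L + e * n) ^ 2
      ≤ 4 * Pn ^ 2 + 16 * w ^ 2 + 16 * L ^ 2 + 4 * (e * n) ^ 2 := by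
    have h' := four_sq (|Pn|) (2 * w) (2 * L) (e * n)
    have hPn2 : |Pn| ^ 2 = Pn ^ 2 := sq_abs Pn
    have h'' : 4 * (|Pn| ^ 2 + (2 * w) ^ 2 + (2 * L) ^ 2 + (e * n) ^ 2)
        = 4 * Pn ^ 2 + 16 * w ^ 2 + 16 * L ^ 2 + 4 * (e * n) ^ 2 := by
      rw [hPn2]; ring
    linarith
  have e1 : 4 * Pn ^ 2 ≤ 8 * n * R' := by nlinarith
  have e2 : 16 * (m * L) ≤ 32 * (L * n) := by nlinarith
  have e3 : 16 * L ^ 2 ≤ (16 / 100) * (L * n) := by nlinarith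
  have goal_expand : (100 * L + 8 * R' + 4 * e ^ 2 * n) * n
      = 100 * (L * n) + 8 * n * R' + 4 * (e * n) ^ 2 := by ring
  rw [goal_expand]
  rw [hw2] at hexp
  linarith [mul_nonneg hL.le hn0.le]

lemma ratio_sq_le_one {S n : ℝ} (h : |S| ≤ n) : (S / n) ^ 2 ≤ 1 := by
  rcases eq_or_ne n 0 with h0 | h0
  · simp [h0]
  · have hn0 : 0 < n := lt_of_le_of_ne (le_trans (abs_nonneg S) h) (Ne.symm h0)
    rw [div_pow, div_le_one (by positivity)]
    nlinarith [abs_le.mp h, sq_nonneg n]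

lemma cs_abs {n : ℕ} (f g : Fin n → ℝ) :
    |∑ i, f i * g i| ≤ Real.sqrt (∑ i, f i ^ 2) * Real.sqrt (∑ i, g i ^ 2) := by
  have h := Finset.sum_mul_sq_le_sq_mul_sq Finset.univ f g
  have h2 := Real.sqrt_le_sqrt h
  rwa [Real.sqrt_sq_eq_abs, Real.sqrt_mul (Finset.sum_nonneg fun i _ => sq_nonneg _)] at h2

end helpers

set_option maxHeartbeats 2000000 in
/- **Statement 1.** There is a constant `C > 0` such that for all `d, T, N`,
`ε ∈ (0,1)`, `δ ∈ (0,1)`, contexts in `X_d = {x : ‖x‖₂ ≤ 1, x₁ = 1/2}` and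
labels in `{0,1}`, with probability at least `1 - δ` over independent
predictions `p_t ~ P_t`,
`SMCal_{F₁ˡⁱⁿ,2} ≤ C (N log(N/δ) + N d log(1/ε) + PSMCal_{F₁ˡⁱⁿ,2} + ε² T)`. -/
open Classical in
theorem stmt1 :
    ∃ C : ℝ, 0 < C ∧
      ∀ (d T N : ℕ) (hd : 0 < d), 0 < T → 0 < N →
      ∀ ε : ℝ, 0 < ε → ε < 1 →
      ∀ δ : ℝ, 0 < δ → δ < 1 →
      ∀ (x : Fin T → Fin d → ℝ),
        (∀ t, Real.sqrt (∑ i, x t i ^ 2) ≤ 1 ∧ x t ⟨0, hd⟩ = 1 / 2) →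
      ∀ (y : Fin T → ℝ), (∀ t, y t = 0 ∨ y t = 1) →
      ∀ (P : Fin T → Fin (N + 1) → ℝ),
        (∀ t i, 0 ≤ P t i) → (∀ t, ∑ i, P t i = 1) →
        -- membership in `F₁ˡⁱⁿ` for the linear function given by `θ`
        let inF1 : (Fin d → ℝ) → Prop := fun θ =>
          ∀ v : Fin d → ℝ, Real.sqrt (∑ i, v i ^ 2) ≤ 1 → v ⟨0, hd⟩ = 1 / 2 →
            |∑ i, θ i * v i| ≤ 1
        -- ℓ₂-swap multicalibration error of realized predictions `ω`
        let SMCal : (Fin T → Fin (N + 1)) → ℝ := fun ω =>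
          ∑ p : Fin (N + 1), (∑ t, if ω t = p then (1 : ℝ) else 0) *
            sSup {r : ℝ | ∃ θ : Fin d → ℝ, inF1 θ ∧
              r = ((∑ t, if ω t = p then
                      (∑ i, θ i * x t i) * (y t - ((p : ℕ) : ℝ) / N) else 0) /
                    (∑ t, if ω t = p then (1 : ℝ) else 0)) ^ 2}
        -- ℓ₂-pseudo swap multicalibration error
        let PSMCal : ℝ :=
          ∑ p : Fin (N + 1), (∑ t, P t p) *
            sSup {r : ℝ | ∃ θ : Fin d → ℝ, inF1 θ ∧
              r = ((∑ t, P t p * ((∑ i, θ i * x t i) * (y t - ((p : ℕ) : ℝ) / N))) /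
                    (∑ t, P t p)) ^ 2}
        1 - δ ≤
          ∑ ω : Fin T → Fin (N + 1),
            if SMCal ω ≤
                C * ((N : ℝ) * Real.log ((N : ℝ) / δ) + (N : ℝ) * (d : ℝ) * Real.log (1 / ε)
                  + PSMCal + ε ^ 2 * (T : ℝ))
            then ∏ t, P t (ω t) else 0 := by
  classical
  refine ⟨100000, by norm_num, ?_⟩
  intro d T N hd hT hN ε hε hε1 δ hδ hδ1 x hx y hy P hP hP1
  intro inF1 SMCal PSMCal
  -- basic facts
  have hN1 : (1:ℝ) ≤ (N:ℝ) := by exact_mod_cast hN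
  have hsum1 : ∑ ω : Fin T → Fin (N+1), ∏ t, P t (ω t) = 1 := by
    have h := Finset.prod_univ_sum (fun _ : Fin T => (Finset.univ : Finset (Fin (N+1))))
      (fun t i => P t i)
    rw [Fintype.piFinset_univ] at h
    rw [← h]
    rw [Finset.prod_congr rfl fun t _ => hP1 t]
    simp
  have hcbound : ∀ (p : Fin (N+1)) (t : Fin T), |y t - ((p:ℕ):ℝ)/N| ≤ 1 := by
    intro p t
    have h1 : (0:ℝ) ≤ ((p:ℕ):ℝ)/N := by positivity
    have h2 : ((p:ℕ):ℝ)/N ≤ 1 := by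
      rw [div_le_one (by exact_mod_cast hN)]
      exact_mod_cast Fin.is_le p
    rcases hy t with h | h <;> rw [h, abs_le] <;> constructor <;> linarith
  have hAbound : ∀ θ, inF1 θ → ∀ t, |∑ i, θ i * x t i| ≤ 1 :=
    fun θ hθ t => hθ (x t) (hx t).1 (hx t).2
  have hF0 : inF1 (fun _ => 0) := by intro v _ _; simp
  have hSabs : ∀ (ω : Fin T → Fin (N+1)) (p : Fin (N+1)) (a : Fin T → ℝ), (∀ t, |a t| ≤ 1) →
      |∑ t, if ω t = p then a t else 0| ≤ ∑ t, if ω t = p then (1:ℝ) else 0 := by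
    intro ω p a ha
    calc |∑ t, if ω t = p then a t else 0| ≤ ∑ t, |if ω t = p then a t else 0| :=
      Finset.abs_sum_le_sum_abs _ _
    _ ≤ ∑ t, if ω t = p then (1:ℝ) else 0 := by
        apply Finset.sum_le_sum
        intro t _
        split
        · exact ha t
        · simp
  have hPabs : ∀ (p : Fin (N+1)) (a : Fin T → ℝ), (∀ t, |a t| ≤ 1) →
      |∑ t, P t p * a t| ≤ ∑ t, P t p := by
    intro p a ha
    calc |∑ t, P t p * a t| ≤ ∑ t, |P t p * a t| := Finset.abs_sum_le_sum_abs _ _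
    _ ≤ ∑ t, P t p := by
        apply Finset.sum_le_sum
        intro t _
        rw [abs_mul, abs_of_nonneg (hP t p)]
        nlinarith [ha t, abs_nonneg (a t), hP t p]
  have hcount : ∀ ω : Fin T → Fin (N+1),
      ∑ p : Fin (N+1), (∑ t, if ω t = p then (1:ℝ) else 0) = (T:ℝ) := by
    intro ω
    rw [Finset.sum_comm]
    rw [Finset.sum_congr rfl fun t _ => Finset.sum_ite_eq Finset.univ (ω t) (fun _ => (1:ℝ))]
    simp
  -- sSup facts for the pseudo sets
  have hPSetBdd : ∀ p : Fin (N+1), BddAbove {r : ℝ | ∃ θ : Fin d → ℝ, inF1 θ ∧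
      r = ((∑ t, P t p * ((∑ i, θ i * x t i) * (y t - ((p : ℕ) : ℝ) / N))) /
            (∑ t, P t p)) ^ 2} := by
    intro p
    refine ⟨1, ?_⟩
    rintro r ⟨θ, hθ, rfl⟩
    exact ratio_sq_le_one (hPabs p _ (fun t => by
      rw [abs_mul]
      exact mul_le_one₀ (hAbound θ hθ t) (abs_nonneg _) (hcbound p t)))
  have hPSet0 : ∀ p : Fin (N+1), (0:ℝ) ∈ {r : ℝ | ∃ θ : Fin d → ℝ, inF1 θ ∧
      r = ((∑ t, P t p * ((∑ i, θ i * x t i) * (y t - ((p : ℕ) : ℝ) / N))) /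
            (∑ t, P t p)) ^ 2} := by
    intro p
    exact ⟨fun _ => 0, hF0, by simp⟩
  have hsupP0 : ∀ p : Fin (N+1), (0:ℝ) ≤ sSup {r : ℝ | ∃ θ : Fin d → ℝ, inF1 θ ∧
      r = ((∑ t, P t p * ((∑ i, θ i * x t i) * (y t - ((p : ℕ) : ℝ) / N))) /
            (∑ t, P t p)) ^ 2} :=
    fun p => le_csSup (hPSetBdd p) (hPSet0 p)
  have hm0 : ∀ p : Fin (N+1), (0:ℝ) ≤ ∑ t, P t p :=
    fun p => Finset.sum_nonneg fun t _ => hP t p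
  have hPSM0 : (0:ℝ) ≤ PSMCal :=
    Finset.sum_nonneg fun p _ => mul_nonneg (hm0 p) (hsupP0 p)
  have hlogNδ : (0:ℝ) ≤ Real.log ((N:ℝ)/δ) := by
    apply Real.log_nonneg
    rw [le_div_iff₀ hδ]
    nlinarith
  have hlogε : (0:ℝ) ≤ Real.log (1/ε) := by
    apply Real.log_nonneg
    rw [le_div_iff₀ hε]
    linarith
  -- bound on SMCal sSup sets, and triviality bound SMCal ≤ T
  have hSMCal_le_T : ∀ ω, SMCal ω ≤ (T:ℝ) := by
    intro ω
    have hperp : ∀ p : Fin (N+1), (∑ t, if ω t = p then (1:ℝ) else 0) *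
        sSup {r : ℝ | ∃ θ : Fin d → ℝ, inF1 θ ∧
          r = ((∑ t, if ω t = p then
                  (∑ i, θ i * x t i) * (y t - ((p : ℕ) : ℝ) / N) else 0) /
                (∑ t, if ω t = p then (1 : ℝ) else 0)) ^ 2}
        ≤ (∑ t, if ω t = p then (1:ℝ) else 0) := by
      intro p
      have hn0 : (0:ℝ) ≤ ∑ t, if ω t = p then (1:ℝ) else 0 :=
        Finset.sum_nonneg fun t _ => by split <;> norm_num
      have hsup1 : sSup {r : ℝ | ∃ θ : Fin d → ℝ, inF1 θ ∧
          r = ((∑ t, if ω t = p then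
                  (∑ i, θ i * x t i) * (y t - ((p : ℕ) : ℝ) / N) else 0) /
                (∑ t, if ω t = p then (1 : ℝ) else 0)) ^ 2} ≤ 1 := by
        apply Real.sSup_le _ zero_le_one
        rintro r ⟨θ, hθ, rfl⟩
        exact ratio_sq_le_one (hSabs ω p _ (fun t => by
          rw [abs_mul]
          exact mul_le_one₀ (hAbound θ hθ t) (abs_nonneg _) (hcbound p t)))
      calc (∑ t, if ω t = p then (1:ℝ) else 0) * _ ≤
          (∑ t, if ω t = p then (1:ℝ) else 0) * 1 := mul_le_mul_of_nonneg_left hsup1 hn0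
      _ = _ := mul_one _
    calc SMCal ω ≤ ∑ p : Fin (N+1), (∑ t, if ω t = p then (1:ℝ) else 0) :=
      Finset.sum_le_sum fun p _ => hperp p
    _ = (T:ℝ) := hcount ω
  by_cases hεhalf : (1:ℝ)/2 < ε
  · -- trivial branch: ε > 1/2
    have hall : ∀ ω : Fin T → Fin (N+1), SMCal ω ≤
        100000 * ((N : ℝ) * Real.log ((N : ℝ) / δ) + (N : ℝ) * (d : ℝ) * Real.log (1 / ε)
          + PSMCal + ε ^ 2 * (T : ℝ)) := by
      intro ω
      have h1 := hSMCal_le_T ω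
      have hT0 : (0:ℝ) ≤ (T:ℝ) := Nat.cast_nonneg T
      have hε2 : (1:ℝ)/4 ≤ ε^2 := by nlinarith
      have h2 : (T:ℝ) ≤ 4 * (ε^2 * (T:ℝ)) := by nlinarith
      have h3 : (0:ℝ) ≤ (N:ℝ) * Real.log ((N:ℝ)/δ) := by
        apply mul_nonneg (Nat.cast_nonneg N) hlogNδ
      have h4 : (0:ℝ) ≤ (N:ℝ) * (d:ℝ) * Real.log (1/ε) := by
        apply mul_nonneg (mul_nonneg (Nat.cast_nonneg N) (Nat.cast_nonneg d)) hlogε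
      nlinarith
    calc (1:ℝ) - δ ≤ 1 := by linarith
    _ = ∑ ω : Fin T → Fin (N+1), ∏ t, P t (ω t) := hsum1.symm
    _ = _ := Finset.sum_congr rfl fun ω _ => (if_pos (hall ω)).symm
  -- main branch: ε ≤ 1/2
  push_neg at hεhalf
  obtain ⟨𝒩, h𝒩F, h𝒩net, h𝒩card⟩ :=
    exists_netP d hd ε hε (by linarith) inF1 hF0 (fun θ hθ => F_norm_le hd θ hθ)
  set K : ℝ := ((N:ℝ)+1) * (2 * (𝒩.card:ℝ) + 2) with hKdef
  have hcard0 : (0:ℝ) ≤ (𝒩.card:ℝ) := Nat.cast_nonneg _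
  have hK2 : (2:ℝ) ≤ K := by nlinarith
  set L : ℝ := Real.log (K/δ) with hLdef
  have hL0 : (0:ℝ) < L := Real.log_pos (by rw [lt_div_iff₀ hδ]; nlinarith)
  have hexpL : Real.exp (-L) = δ/K := by
    rw [hLdef, Real.exp_neg, Real.exp_log (by positivity), inv_div]
  set Afin : Fin (N+1) → Finset (Fin T → ℝ) := fun p =>
    (𝒩.image (fun ν t => (∑ i, ν i * x t i) * (y t - ((p:ℕ):ℝ)/N)) ∪
     𝒩.image (fun ν t => -((∑ i, ν i * x t i) * (y t - ((p:ℕ):ℝ)/N)))) ∪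
    {fun _ => (1:ℝ), fun _ => (-1:ℝ)} with hAfin
  have hAfincard : ∀ p, ((Afin p).card:ℝ) ≤ 2 * (𝒩.card:ℝ) + 2 := by
    intro p
    have h1 : (Afin p).card ≤ 𝒩.card + 𝒩.card + 2 := by
      calc (Afin p).card ≤ (𝒩.image (fun ν t => (∑ i, ν i * x t i) * (y t - ((p:ℕ):ℝ)/N)) ∪
            𝒩.image (fun ν t => -((∑ i, ν i * x t i) * (y t - ((p:ℕ):ℝ)/N)))).card
            + ({fun _ => (1:ℝ), fun _ => (-1:ℝ)} : Finset (Fin T → ℝ)).card :=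
          Finset.card_union_le _ _
      _ ≤ (𝒩.image (fun ν t => (∑ i, ν i * x t i) * (y t - ((p:ℕ):ℝ)/N))).card
            + (𝒩.image (fun ν t => -((∑ i, ν i * x t i) * (y t - ((p:ℕ):ℝ)/N)))).card
            + ({fun _ => (1:ℝ), fun _ => (-1:ℝ)} : Finset (Fin T → ℝ)).card := by
          have := Finset.card_union_le
            (𝒩.image (fun ν t => (∑ i, ν i * x t i) * (y t - ((p:ℕ):ℝ)/N)))
            (𝒩.image (fun ν t => -((∑ i, ν i * x t i) * (y t - ((p:ℕ):ℝ)/N))))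
          exact Nat.add_le_add_right this _
      _ ≤ 𝒩.card + 𝒩.card + 2 := by
          have h2 := Finset.card_image_le (s := 𝒩)
            (f := fun ν t => (∑ i, ν i * x t i) * (y t - ((p:ℕ):ℝ)/N))
          have h3 := Finset.card_image_le (s := 𝒩)
            (f := fun ν t => -((∑ i, ν i * x t i) * (y t - ((p:ℕ):ℝ)/N)))
          have h4 : ({fun _ => (1:ℝ), fun _ => (-1:ℝ)} : Finset (Fin T → ℝ)).card ≤ 2 := by
            apply le_trans (Finset.card_insert_le _ _)
            simp
          exact Nat.add_le_add (Nat.add_le_add h2 h3) h4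
    calc ((Afin p).card:ℝ) ≤ ((𝒩.card + 𝒩.card + 2 : ℕ):ℝ) := by exact_mod_cast h1
    _ = 2 * (𝒩.card:ℝ) + 2 := by push_cast; ring
  have hAfinmem1 : ∀ p, ∀ a ∈ Afin p, ∀ t, |a t| ≤ 1 := by
    intro p a ha t
    rw [hAfin] at ha
    rcases Finset.mem_union.mp ha with h | h
    · rcases Finset.mem_union.mp h with h | h
      · obtain ⟨ν, hν, rfl⟩ := Finset.mem_image.mp h
        rw [abs_mul]
        exact mul_le_one₀ (hAbound ν (h𝒩F ν hν) t) (abs_nonneg _) (hcbound p t)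
      · obtain ⟨ν, hν, rfl⟩ := Finset.mem_image.mp h
        rw [abs_neg, abs_mul]
        exact mul_le_one₀ (hAbound ν (h𝒩F ν hν) t) (abs_nonneg _) (hcbound p t)
    · rcases Finset.mem_insert.mp h with h | h
      · rw [h]; norm_num
      · rw [Finset.mem_singleton.mp h]; norm_num
  set G : (Fin T → Fin (N+1)) → Prop := fun ω => ∀ p, ∀ a ∈ Afin p,
    (∑ t, if ω t = p then a t else 0) - (∑ t, P t p * a t)
      ≤ 2 * Real.sqrt ((∑ t, P t p * a t ^ 2) * L) + 2 * L with hGdef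
  have hqnn : ∀ ω : Fin T → Fin (N+1), (0:ℝ) ≤ ∏ t, P t (ω t) :=
    fun ω => Finset.prod_nonneg fun t _ => hP t (ω t)
  have hK0' : K ≠ 0 := by intro h; rw [h] at hK2; norm_num at hK2
  have hbad : ∑ ω : Fin T → Fin (N+1), (if ¬ G ω then ∏ t, P t (ω t) else 0) ≤ δ := by
    have hpt : ∀ ω : Fin T → Fin (N+1), (if ¬ G ω then ∏ t, P t (ω t) else 0)
        ≤ ∑ p : Fin (N+1), ∑ a ∈ Afin p,
          (if 2 * Real.sqrt ((∑ t, P t p * a t ^ 2) * L) + 2 * L ≤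
              (∑ t, if ω t = p then a t else 0) - ∑ t, P t p * a t
           then ∏ t, P t (ω t) else 0) := by
      intro ω
      have hterm_nn : ∀ p : Fin (N+1), ∀ a ∈ Afin p, (0:ℝ) ≤
          (if 2 * Real.sqrt ((∑ t, P t p * a t ^ 2) * L) + 2 * L ≤
              (∑ t, if ω t = p then a t else 0) - ∑ t, P t p * a t
           then ∏ t, P t (ω t) else 0) := by
        intro p a _
        split
        · exact hqnn ω
        · exact le_refl 0
      by_cases hGω : G ω
      · rw [if_neg (not_not_intro hGω)]
        exact Finset.sum_nonneg fun p _ => Finset.sum_nonneg (hterm_nn p)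
      · rw [if_pos hGω]
        simp only [hGdef] at hGω
        push_neg at hGω
        obtain ⟨p, a, ha, hviol⟩ := hGω
        refine le_trans ?_ (Finset.single_le_sum
          (f := fun p : Fin (N+1) => ∑ a ∈ Afin p,
            (if 2 * Real.sqrt ((∑ t, P t p * a t ^ 2) * L) + 2 * L ≤
                (∑ t, if ω t = p then a t else 0) - ∑ t, P t p * a t
             then ∏ t, P t (ω t) else 0))
          (fun p _ => Finset.sum_nonneg (hterm_nn p)) (Finset.mem_univ p))
        refine le_trans ?_ (Finset.single_le_sum (hterm_nn p) ha)
        rw [if_pos (le_of_lt hviol)]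
    calc ∑ ω : Fin T → Fin (N+1), (if ¬ G ω then ∏ t, P t (ω t) else 0)
        ≤ ∑ ω : Fin T → Fin (N+1), ∑ p : Fin (N+1), ∑ a ∈ Afin p,
          (if 2 * Real.sqrt ((∑ t, P t p * a t ^ 2) * L) + 2 * L ≤
              (∑ t, if ω t = p then a t else 0) - ∑ t, P t p * a t
           then ∏ t, P t (ω t) else 0) := Finset.sum_le_sum fun ω _ => hpt ω
    _ = ∑ p : Fin (N+1), ∑ ω : Fin T → Fin (N+1), ∑ a ∈ Afin p,
          (if 2 * Real.sqrt ((∑ t, P t p * a t ^ 2) * L) + 2 * L ≤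
              (∑ t, if ω t = p then a t else 0) - ∑ t, P t p * a t
           then ∏ t, P t (ω t) else 0) := Finset.sum_comm
    _ = ∑ p : Fin (N+1), ∑ a ∈ Afin p, ∑ ω : Fin T → Fin (N+1),
          (if 2 * Real.sqrt ((∑ t, P t p * a t ^ 2) * L) + 2 * L ≤
              (∑ t, if ω t = p then a t else 0) - ∑ t, P t p * a t
           then ∏ t, P t (ω t) else 0) := Finset.sum_congr rfl fun p _ => Finset.sum_comm
    _ ≤ ∑ p : Fin (N+1), ∑ _a ∈ Afin p, Real.exp (-L) :=
        Finset.sum_le_sum fun p _ => Finset.sum_le_sum fun a ha =>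
          chernoff P hP hP1 a (hAfinmem1 p a ha) p L hL0
    _ ≤ ∑ _p : Fin (N+1), (2 * (𝒩.card:ℝ) + 2) * (δ/K) := by
        apply Finset.sum_le_sum
        intro p _
        rw [Finset.sum_const, nsmul_eq_mul, hexpL]
        exact mul_le_mul_of_nonneg_right (hAfincard p) (by positivity)
    _ = ((N:ℝ)+1) * ((2 * (𝒩.card:ℝ) + 2) * (δ/K)) := by
        rw [Finset.sum_const, Finset.card_univ, Fintype.card_fin, nsmul_eq_mul]
        push_cast; ring
    _ = K * (δ/K) := by rw [hKdef]; ring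
    _ = δ := by
        rw [mul_comm]
        exact div_mul_cancel₀ δ hK0'
  have hgoodbound : ∀ ω, G ω → SMCal ω ≤ 100*((N:ℝ)+1)*L + 8*PSMCal + 16*ε^2*(T:ℝ) := by
    intro ω hGω
    have hperp : ∀ p : Fin (N+1),
        (∑ t, if ω t = p then (1:ℝ) else 0) *
          sSup {r : ℝ | ∃ θ : Fin d → ℝ, inF1 θ ∧
            r = ((∑ t, if ω t = p then
                    (∑ i, θ i * x t i) * (y t - ((p : ℕ) : ℝ) / N) else 0) /
                  (∑ t, if ω t = p then (1 : ℝ) else 0)) ^ 2}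
        ≤ 100*L + 8*((∑ t, P t p) *
            sSup {r : ℝ | ∃ θ : Fin d → ℝ, inF1 θ ∧
              r = ((∑ t, P t p * ((∑ i, θ i * x t i) * (y t - ((p : ℕ) : ℝ) / N))) /
                    (∑ t, P t p)) ^ 2})
          + 16*ε^2*(∑ t, if ω t = p then (1:ℝ) else 0) := by
      intro p
      set n : ℝ := ∑ t, if ω t = p then (1:ℝ) else 0 with hn
      set m : ℝ := ∑ t, P t p with hm
      set SP : ℝ := sSup {r : ℝ | ∃ θ : Fin d → ℝ, inF1 θ ∧
              r = ((∑ t, P t p * ((∑ i, θ i * x t i) * (y t - ((p : ℕ) : ℝ) / N))) /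
                    m) ^ 2} with hSP
      have hR'0 : (0:ℝ) ≤ m * SP := mul_nonneg (hm0 p) (hsupP0 p)
      have hn01 : n = 0 ∨ 1 ≤ n := by
        have hcard : n = (((Finset.univ.filter (fun t => ω t = p)).card : ℕ) : ℝ) := by
          rw [hn, Finset.sum_boole]
        rcases Nat.eq_zero_or_pos (Finset.univ.filter (fun t => ω t = p)).card with h | h
        · left; rw [hcard, h]; norm_num
        · right; rw [hcard]; exact_mod_cast h
      rcases hn01 with hn0 | hn1
      · rw [hn0, zero_mul]
        nlinarith [hL0, hR'0]
      · -- main case: 1 ≤ n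
        have hnpos : (0:ℝ) < n := by linarith
        -- bound every element of the realized set
        have hsup_le : sSup {r : ℝ | ∃ θ : Fin d → ℝ, inF1 θ ∧
            r = ((∑ t, if ω t = p then
                    (∑ i, θ i * x t i) * (y t - ((p : ℕ) : ℝ) / N) else 0) / n) ^ 2}
            ≤ (100*L + 8*(m*SP) + 16*ε^2*n) / n := by
          apply Real.sSup_le _ (by positivity)
          rintro r ⟨θ, hθF, rfl⟩
          obtain ⟨ν, hν, hclose⟩ := h𝒩net θ hθF
          have hνF : inF1 ν := h𝒩F ν hν
          have haν1 : ∀ t, |(∑ i, ν i * x t i) * (y t - ((p:ℕ):ℝ)/N)| ≤ 1 := fun t => by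
            rw [abs_mul]
            exact mul_le_one₀ (hAbound ν hνF t) (abs_nonneg _) (hcbound p t)
          have haθ1 : ∀ t, |(∑ i, θ i * x t i) * (y t - ((p:ℕ):ℝ)/N)| ≤ 1 := fun t => by
            rw [abs_mul]
            exact mul_le_one₀ (hAbound θ hθF t) (abs_nonneg _) (hcbound p t)
          -- h1
          have h1 : |∑ t, if ω t = p then
              (∑ i, θ i * x t i) * (y t - ((p:ℕ):ℝ)/N) else 0| ≤ n := by
            rw [hn]; exact hSabs ω p _ haθ1
          -- h2
          have hAd : ∀ t, |(∑ i, θ i * x t i) - (∑ i, ν i * x t i)| ≤ 2*ε := by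
            intro t
            have e : (∑ i, θ i * x t i) - (∑ i, ν i * x t i) = ∑ i, (θ i - ν i) * x t i := by
              rw [← Finset.sum_sub_distrib]
              exact Finset.sum_congr rfl fun i _ => by ring
            rw [e]
            calc |∑ i, (θ i - ν i) * x t i|
                ≤ Real.sqrt (∑ i, (θ i - ν i)^2) * Real.sqrt (∑ i, x t i ^2) := cs_abs _ _
            _ ≤ (2*ε) * 1 := mul_le_mul hclose (hx t).1 (Real.sqrt_nonneg _) (by linarith)
            _ = 2*ε := mul_one _
          have h2 : |(∑ t, if ω t = p then
              (∑ i, θ i * x t i) * (y t - ((p:ℕ):ℝ)/N) else 0)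
              - (∑ t, if ω t = p then
              (∑ i, ν i * x t i) * (y t - ((p:ℕ):ℝ)/N) else 0)| ≤ (2*ε) * n := by
            have hdiff : (∑ t, if ω t = p then
                (∑ i, θ i * x t i) * (y t - ((p:ℕ):ℝ)/N) else 0)
                - (∑ t, if ω t = p then
                (∑ i, ν i * x t i) * (y t - ((p:ℕ):ℝ)/N) else 0)
                = ∑ t, if ω t = p then
                  ((∑ i, θ i * x t i) - (∑ i, ν i * x t i)) * (y t - ((p:ℕ):ℝ)/N) else 0 := by
              rw [← Finset.sum_sub_distrib]
              refine Finset.sum_congr rfl fun t _ => ?_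
              split
              · ring
              · ring
            rw [hdiff]
            calc |∑ t, if ω t = p then
                  ((∑ i, θ i * x t i) - (∑ i, ν i * x t i)) * (y t - ((p:ℕ):ℝ)/N) else 0|
                ≤ ∑ t, |if ω t = p then
                  ((∑ i, θ i * x t i) - (∑ i, ν i * x t i)) * (y t - ((p:ℕ):ℝ)/N) else 0| :=
                Finset.abs_sum_le_sum_abs _ _
            _ ≤ ∑ t, (if ω t = p then (2*ε) * (1:ℝ) else 0) := by
                refine Finset.sum_le_sum fun t _ => ?_
                split
                · rw [abs_mul]
                  exact mul_le_mul (hAd t) (hcbound p t) (abs_nonneg _) (by linarith)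
                · simp
            _ = (2*ε) * n := by
                rw [hn, Finset.mul_sum]
                refine Finset.sum_congr rfl fun t _ => ?_
                split
                · ring
                · ring
          -- memberships in Afin p
          have hmem1 : (fun t => (∑ i, ν i * x t i) * (y t - ((p:ℕ):ℝ)/N)) ∈ Afin p := by
            rw [hAfin]
            exact Finset.mem_union_left _ (Finset.mem_union_left _ (Finset.mem_image_of_mem _ hν))
          have hmem2 : (fun t => -((∑ i, ν i * x t i) * (y t - ((p:ℕ):ℝ)/N))) ∈ Afin p := by
            rw [hAfin]
            exact Finset.mem_union_left _ (Finset.mem_union_right _ (Finset.mem_image_of_mem _ hν))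
          have hmem3 : (fun _ : Fin T => (1:ℝ)) ∈ Afin p := by
            rw [hAfin]
            exact Finset.mem_union_right _ (Finset.mem_insert_self _ _)
          have hmem4 : (fun _ : Fin T => (-1:ℝ)) ∈ Afin p := by
            rw [hAfin]
            exact Finset.mem_union_right _ (Finset.mem_insert_of_mem (Finset.mem_singleton_self _))
          -- deviation bounds from G
          have hdev : ∀ a : Fin T → ℝ, (∀ t, |a t| ≤ 1) →
              2 * Real.sqrt ((∑ t, P t p * a t ^ 2) * L) + 2 * L
                ≤ 2 * Real.sqrt (m * L) + 2 * L := by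
            intro a ha
            have hV : (∑ t, P t p * a t ^ 2) ≤ m := by
              rw [hm]
              refine Finset.sum_le_sum fun t _ => ?_
              have h := abs_le.mp (ha t)
              have ha2 : a t ^ 2 ≤ 1 := by nlinarith [h.1, h.2]
              exact mul_le_of_le_one_right (hP t p) ha2
            have := Real.sqrt_le_sqrt (mul_le_mul_of_nonneg_right hV hL0.le)
            linarith
          have h3 : |(∑ t, if ω t = p then
              (∑ i, ν i * x t i) * (y t - ((p:ℕ):ℝ)/N) else 0)
              - (∑ t, P t p * ((∑ i, ν i * x t i) * (y t - ((p:ℕ):ℝ)/N)))|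
              ≤ 2 * Real.sqrt (m * L) + 2 * L := by
            have hG1 : (∑ t, if ω t = p then
                (∑ i, ν i * x t i) * (y t - ((p:ℕ):ℝ)/N) else 0)
                - (∑ t, P t p * ((∑ i, ν i * x t i) * (y t - ((p:ℕ):ℝ)/N)))
                ≤ 2 * Real.sqrt ((∑ t, P t p *
                    ((∑ i, ν i * x t i) * (y t - ((p:ℕ):ℝ)/N)) ^ 2) * L) + 2 * L :=
              hGω p _ hmem1
            have hG2 : (∑ t, if ω t = p then
                -((∑ i, ν i * x t i) * (y t - ((p:ℕ):ℝ)/N)) else 0)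
                - (∑ t, P t p * -((∑ i, ν i * x t i) * (y t - ((p:ℕ):ℝ)/N)))
                ≤ 2 * Real.sqrt ((∑ t, P t p *
                    (-((∑ i, ν i * x t i) * (y t - ((p:ℕ):ℝ)/N))) ^ 2) * L) + 2 * L :=
              hGω p _ hmem2
            have e1 : (∑ t, if ω t = p then
                -((∑ i, ν i * x t i) * (y t - ((p:ℕ):ℝ)/N)) else 0)
                = -(∑ t, if ω t = p then
                (∑ i, ν i * x t i) * (y t - ((p:ℕ):ℝ)/N) else 0) := by
              rw [← Finset.sum_neg_distrib]
              refine Finset.sum_congr rfl fun t _ => ?_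
              split
              · rfl
              · simp
            have e2 : (∑ t, P t p * -((∑ i, ν i * x t i) * (y t - ((p:ℕ):ℝ)/N)))
                = -(∑ t, P t p * ((∑ i, ν i * x t i) * (y t - ((p:ℕ):ℝ)/N))) := by
              rw [← Finset.sum_neg_distrib]
              exact Finset.sum_congr rfl fun t _ => by ring
            have e3 : (∑ t, P t p * (-((∑ i, ν i * x t i) * (y t - ((p:ℕ):ℝ)/N))) ^ 2)
                = (∑ t, P t p * ((∑ i, ν i * x t i) * (y t - ((p:ℕ):ℝ)/N)) ^ 2) :=
              Finset.sum_congr rfl fun t _ => by rw [neg_sq]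
            rw [e1, e2, e3] at hG2
            have hd1 := (hG1.trans (hdev _ haν1))
            have hd2 := (hG2.trans (hdev (fun t => ((∑ i, ν i * x t i) * (y t - ((p:ℕ):ℝ)/N)))
              haν1))
            rw [abs_le]
            constructor
            · linarith
            · linarith
          have h4 : |n - m| ≤ 2 * Real.sqrt (m * L) + 2 * L := by
            have hG3 : (∑ t, if ω t = p then (1:ℝ) else 0) - (∑ t, P t p * (1:ℝ))
                ≤ 2 * Real.sqrt ((∑ t, P t p * (1:ℝ) ^ 2) * L) + 2 * L := hGω p _ hmem3
            have hG4 : (∑ t, if ω t = p then (-1:ℝ) else 0) - (∑ t, P t p * (-1:ℝ))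
                ≤ 2 * Real.sqrt ((∑ t, P t p * (-1:ℝ) ^ 2) * L) + 2 * L := hGω p _ hmem4
            have e4 : (∑ t, P t p * (1:ℝ)) = m := by rw [hm]; exact Finset.sum_congr rfl fun t _ => mul_one _
            have e5 : (∑ t, P t p * (1:ℝ)^2) = m := by
              rw [hm]; exact Finset.sum_congr rfl fun t _ => by norm_num
            have e6 : (∑ t, if ω t = p then (-1:ℝ) else 0)
                = -(∑ t, if ω t = p then (1:ℝ) else 0) := by
              rw [← Finset.sum_neg_distrib]
              refine Finset.sum_congr rfl fun t _ => ?_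
              split
              · rfl
              · simp
            have e7 : (∑ t, P t p * (-1:ℝ)) = -m := by
              rw [hm, ← Finset.sum_neg_distrib]
              exact Finset.sum_congr rfl fun t _ => by ring
            have e8 : (∑ t, P t p * (-1:ℝ)^2) = m := by
              rw [hm]; exact Finset.sum_congr rfl fun t _ => by norm_num
            rw [e4, e5, ← hn] at hG3
            rw [e6, e7, e8, ← hn] at hG4
            rw [abs_le]
            constructor
            · linarith
            · linarith
          have h5 : |∑ t, P t p * ((∑ i, ν i * x t i) * (y t - ((p:ℕ):ℝ)/N))| ≤ m := by
            rw [hm]; exact hPabs p _ haν1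
          have h6 : (∑ t, P t p * ((∑ i, ν i * x t i) * (y t - ((p:ℕ):ℝ)/N))) ^ 2
              ≤ m * (m * SP) := by
            have hmemP : ((∑ t, P t p * ((∑ i, ν i * x t i) * (y t - ((p:ℕ):ℝ)/N))) / m) ^ 2
                ∈ {r : ℝ | ∃ θ : Fin d → ℝ, inF1 θ ∧
                  r = ((∑ t, P t p * ((∑ i, θ i * x t i) * (y t - ((p : ℕ) : ℝ) / N))) /
                        m) ^ 2} := ⟨ν, hνF, rfl⟩
            have hle : ((∑ t, P t p * ((∑ i, ν i * x t i) * (y t - ((p:ℕ):ℝ)/N))) / m) ^ 2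
                ≤ SP := by
              rw [hSP]
              exact le_csSup (by rw [hm]; exact hPSetBdd p) hmemP
            rcases eq_or_lt_of_le (hm0 p) with hmz | hmpos
            · have hmeq : m = 0 := by rw [hm]; exact hmz.symm
              rw [hmeq] at h5
              have hz : (∑ t, P t p * ((∑ i, ν i * x t i) * (y t - ((p:ℕ):ℝ)/N))) = 0 :=
                abs_eq_zero.mp (le_antisymm h5 (abs_nonneg _))
              rw [hz, hmeq]
              norm_num
            · have heq : (∑ t, P t p * ((∑ i, ν i * x t i) * (y t - ((p:ℕ):ℝ)/N))) ^ 2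
                  = m^2 * (((∑ t, P t p * ((∑ i, ν i * x t i) * (y t - ((p:ℕ):ℝ)/N))) / m) ^ 2) := by
                rw [div_pow, mul_div_assoc']
                exact (mul_div_cancel_left₀ _ (pow_ne_zero 2 hmpos.ne')).symm
              rw [heq]
              calc m^2 * (((∑ t, P t p * ((∑ i, ν i * x t i) * (y t - ((p:ℕ):ℝ)/N))) / m) ^ 2)
                  ≤ m^2 * SP := mul_le_mul_of_nonneg_left hle (sq_nonneg m)
              _ = m * (m * SP) := by ring
          -- apply det_bound
          have hdb := det_bound (Or.inr hn1) (hm0 p) hL0 (by linarith : (0:ℝ) ≤ 2*ε) hR'0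
            h1 h2 h3 h4 h5 h6
          have hBn : (100*L + 8*(m*SP) + 4*(2*ε)^2*n)*n = (100*L + 8*(m*SP) + 16*ε^2*n)*n := by
            ring
          rw [hBn] at hdb
          rw [div_pow, div_le_div_iff₀ (by positivity) hnpos]
          nlinarith [hdb, hnpos]
        calc n * sSup {r : ℝ | ∃ θ : Fin d → ℝ, inF1 θ ∧
            r = ((∑ t, if ω t = p then
                    (∑ i, θ i * x t i) * (y t - ((p : ℕ) : ℝ) / N) else 0) / n) ^ 2}
            ≤ n * ((100*L + 8*(m*SP) + 16*ε^2*n) / n) :=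
              mul_le_mul_of_nonneg_left hsup_le hnpos.le
        _ = 100*L + 8*(m*SP) + 16*ε^2*n := by field_simp
    calc SMCal ω ≤ ∑ p : Fin (N+1), (100*L + 8*((∑ t, P t p) *
          sSup {r : ℝ | ∃ θ : Fin d → ℝ, inF1 θ ∧
            r = ((∑ t, P t p * ((∑ i, θ i * x t i) * (y t - ((p : ℕ) : ℝ) / N))) /
                  (∑ t, P t p)) ^ 2})
        + 16*ε^2*(∑ t, if ω t = p then (1:ℝ) else 0)) :=
      Finset.sum_le_sum fun p _ => hperp p
    _ = 100*((N:ℝ)+1)*L + 8*PSMCal + 16*ε^2*(T:ℝ) := by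
      rw [Finset.sum_add_distrib, Finset.sum_add_distrib]
      have c1 : ∑ _p : Fin (N+1), 100*L = 100*((N:ℝ)+1)*L := by
        rw [Finset.sum_const, Finset.card_univ, Fintype.card_fin, nsmul_eq_mul]
        push_cast; ring
      have c2 : ∑ p : Fin (N+1), 8*((∑ t, P t p) *
          sSup {r : ℝ | ∃ θ : Fin d → ℝ, inF1 θ ∧
            r = ((∑ t, P t p * ((∑ i, θ i * x t i) * (y t - ((p : ℕ) : ℝ) / N))) /
                  (∑ t, P t p)) ^ 2}) = 8*PSMCal := by
        rw [← Finset.mul_sum]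
      have c3 : ∑ p : Fin (N+1), 16*ε^2*(∑ t, if ω t = p then (1:ℝ) else 0)
          = 16*ε^2*(T:ℝ) := by
        rw [← Finset.mul_sum, hcount ω]
      rw [c1, c2, c3]
  have hfinal : 100*((N:ℝ)+1)*L + 8*PSMCal + 16*ε^2*(T:ℝ) ≤
      100000 * ((N : ℝ) * Real.log ((N : ℝ) / δ) + (N : ℝ) * (d : ℝ) * Real.log (1 / ε)
        + PSMCal + ε ^ 2 * (T : ℝ)) := by
    have hd1 : (1:ℝ) ≤ (d:ℝ) := by exact_mod_cast hd
    have hloge2 : Real.log 2 ≤ Real.log (1/ε) :=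
      Real.log_le_log (by norm_num) (by rw [le_div_iff₀ hε]; linarith)
    have hlog1δ : (0:ℝ) ≤ Real.log (1/δ) :=
      Real.log_nonneg (by rw [le_div_iff₀ hδ]; linarith)
    have hlogN0 : (0:ℝ) ≤ Real.log (N:ℝ) := Real.log_nonneg hN1
    have h12 : (1:ℝ) ≤ 12/ε := by rw [le_div_iff₀ hε]; linarith
    have hLeq : L = Real.log K + Real.log (1/δ) := by
      rw [hLdef, div_eq_mul_one_div, Real.log_mul hK0' (by positivity)]
    have hlogKsplit : Real.log K = Real.log ((N:ℝ)+1) + Real.log (2*(𝒩.card:ℝ)+2) := by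
      rw [hKdef, Real.log_mul (by positivity) (by positivity)]
    have hlogN1 : Real.log ((N:ℝ)+1) ≤ Real.log 2 + Real.log (N:ℝ) := by
      rw [← Real.log_mul (by norm_num) (by positivity)]
      exact Real.log_le_log (by positivity) (by linarith)
    have hpow1 : (1:ℝ) ≤ (12/ε)^d := one_le_pow₀ h12
    have hlogc : Real.log (2*(𝒩.card:ℝ)+2) ≤ Real.log 4 + (d:ℝ) * Real.log (12/ε) := by
      have h1 : 2*(𝒩.card:ℝ)+2 ≤ 4 * (12/ε)^d := by nlinarith
      calc Real.log (2*(𝒩.card:ℝ)+2) ≤ Real.log (4 * (12/ε)^d) :=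
        Real.log_le_log (by positivity) h1
      _ = Real.log 4 + (d:ℝ) * Real.log (12/ε) := by
        rw [Real.log_mul (by norm_num) (by positivity), Real.log_pow]
    have hlog4 : Real.log 4 = 2 * Real.log 2 := by
      rw [show (4:ℝ) = 2^2 by norm_num, Real.log_pow]
      norm_num
    have hlog12e : Real.log (12/ε) ≤ 5 * Real.log (1/ε) := by
      have h1 : Real.log (12/ε) = Real.log 12 + Real.log (1/ε) := by
        rw [div_eq_mul_one_div, Real.log_mul (by norm_num) (by positivity)]
      have h2 : Real.log 12 ≤ 4 * Real.log 2 := by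
        calc Real.log 12 ≤ Real.log 16 := Real.log_le_log (by norm_num) (by norm_num)
        _ = 4 * Real.log 2 := by
          rw [show (16:ℝ) = 2^4 by norm_num, Real.log_pow]
          norm_num
      have h3 : (0:ℝ) ≤ Real.log 2 := Real.log_nonneg (by norm_num)
      linarith
    have hLle : L ≤ Real.log (N:ℝ) + Real.log (1/δ) + 8*(d:ℝ)*Real.log (1/ε) := by
      have h3 : (0:ℝ) ≤ Real.log 2 := Real.log_nonneg (by norm_num)
      have hdB : Real.log 2 ≤ (d:ℝ) * Real.log (1/ε) := by nlinarith
      have h5 : (d:ℝ) * Real.log (12/ε) ≤ 5 * ((d:ℝ) * Real.log (1/ε)) := by nlinarith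
      rw [hLeq, hlogKsplit]
      have h6 : Real.log 4 ≤ 2 * ((d:ℝ) * Real.log (1/ε)) := by
        rw [hlog4]; nlinarith
      nlinarith
    have hAeq : Real.log ((N:ℝ)/δ) = Real.log (N:ℝ) + Real.log (1/δ) := by
      rw [div_eq_mul_one_div, Real.log_mul (by positivity) (by positivity)]
    have hE0 : (0:ℝ) ≤ ε^2*(T:ℝ) := by positivity
    have s1 : 100*((N:ℝ)+1)*L ≤ 200*((N:ℝ)*L) := by nlinarith
    have s2 : (N:ℝ)*L ≤ (N:ℝ)*(Real.log (N:ℝ) + Real.log (1/δ) + 8*(d:ℝ)*Real.log (1/ε)) :=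
      mul_le_mul_of_nonneg_left hLle (Nat.cast_nonneg N)
    have s3 : (N:ℝ)*Real.log ((N:ℝ)/δ) = (N:ℝ)*Real.log (N:ℝ) + (N:ℝ)*Real.log (1/δ) := by
      rw [hAeq]; ring
    have hNA0 : (0:ℝ) ≤ (N:ℝ)*Real.log ((N:ℝ)/δ) := mul_nonneg (Nat.cast_nonneg N) hlogNδ
    have hNdB0 : (0:ℝ) ≤ (N:ℝ)*(d:ℝ)*Real.log (1/ε) :=
      mul_nonneg (mul_nonneg (Nat.cast_nonneg N) (Nat.cast_nonneg d)) hlogε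
    nlinarith [s1, s2, s3, hPSM0, hE0, hNA0, hNdB0]
  -- assembly
  have hmono : ∀ ω : Fin T → Fin (N+1), (if G ω then ∏ t, P t (ω t) else 0) ≤
      (if SMCal ω ≤ 100000 * ((N : ℝ) * Real.log ((N : ℝ) / δ)
          + (N : ℝ) * (d : ℝ) * Real.log (1 / ε) + PSMCal + ε ^ 2 * (T : ℝ))
       then ∏ t, P t (ω t) else 0) := by
    intro ω
    by_cases hGω : G ω
    · rw [if_pos hGω, if_pos ((hgoodbound ω hGω).trans hfinal)]
    · rw [if_neg hGω]
      split
      · exact Finset.prod_nonneg fun t _ => hP t (ω t)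
      · exact le_refl 0
  have hsplit : ∑ ω : Fin T → Fin (N+1), (if G ω then ∏ t, P t (ω t) else 0)
      = 1 - ∑ ω : Fin T → Fin (N+1), (if ¬ G ω then ∏ t, P t (ω t) else 0) := by
    rw [← hsum1]
    rw [eq_sub_iff_add_eq, ← Finset.sum_add_distrib]
    apply Finset.sum_congr rfl
    intro ω _
    by_cases hGω : G ω
    · rw [if_pos hGω, if_neg (not_not_intro hGω), add_zero]
    · rw [if_neg hGω, if_pos hGω, zero_add]
  calc (1:ℝ) - δ ≤ ∑ ω : Fin T → Fin (N+1), (if G ω then ∏ t, P t (ω t) else 0) := by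
        rw [hsplit]; linarith
  _ ≤ _ := Finset.sum_le_sum fun ω _ => hmono ω
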